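/- For every k ≥ 1, the vector (2, 4, k, 1) is not 0-realizable, and the vector (2, 5, 2, 1) is not 0-realizable: no tp0 cop-win graph has either as its rank cardinality vector. -/

import Mathlib

namespace CopsRobbers

variable {V : Type*}

/-- The closed neighborhood of `v` within the vertex set `S` (graphs are reflexive,
so `v` itself belongs to its closed neighborhood). -/
def closedNbhd (G : SimpleGraph V) (S : Set V) (v : V) : Set V :=
  {u | u ∈ S ∧ (u = v ∨ G.Adj u v)}

/-- `v` is a strict corner of the subgraph induced on `S`: some other vertex `w ∈ S`
strictly corners `v`, i.e. `N[v] ⊊ N[w]` within `S`. -/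
def StrictCorner (G : SimpleGraph V) (S : Set V) (v : V) : Prop :=
  v ∈ S ∧ ∃ w ∈ S, w ≠ v ∧ closedNbhd G S v ⊂ closedNbhd G S w

/-- The remaining vertex sets of the corner ranking procedure (0-indexed auxiliary
version): at each step all current strict corners are removed. -/
def stageAux (G : SimpleGraph V) : ℕ → Set V
  | 0 => Set.univ
  | n + 1 => stageAux G n \ {v | StrictCorner G (stageAux G n) v}

/-- `stage G k` is the vertex set of `G^(k)` (for `k ≥ 1`), so `stage G 1 = V(G)`. -/
def stage (G : SimpleGraph V) (k : ℕ) : Set V := stageAux G (k - 1)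

/-- The corner rank of a vertex: the least `k ≥ 1` such that `v` is a strict corner
of `G^(k)`, or `G^(k)` is a clique still containing `v`; and `⊤` (that is, `∞`) if
there is no such `k`. -/
noncomputable def cornerRank (G : SimpleGraph V) (v : V) : ℕ∞ :=
  sInf {k : ℕ∞ | ∃ n : ℕ, k = (n : ℕ∞) ∧ 1 ≤ n ∧
    (StrictCorner G (stage G n) v ∨ (G.IsClique (stage G n) ∧ v ∈ stage G n))}

/-- The corner rank of a graph: the largest corner rank of a vertex. -/
noncomputable def graphRank (G : SimpleGraph V) : ℕ∞ := ⨆ v, cornerRank G v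

/-- A graph is cop-win iff every vertex has finite corner rank. -/
def CopWin (G : SimpleGraph V) : Prop := ∀ v, cornerRank G v ≠ ⊤

/-- `v` dominates the set `S`: `v` is (reflexively) adjacent to every vertex of `S`. -/
def Dominates (G : SimpleGraph V) (v : V) (S : Set V) : Prop :=
  ∀ u ∈ S, u = v ∨ G.Adj v u

/-- A cop-win graph of corner rank `α ≥ 2` is `tp1` if some vertex of corner rank `α`
dominates the vertex set of `G^(α-1)`. -/
def Tp1 (G : SimpleGraph V) : Prop :=
  ∃ α : ℕ, 2 ≤ α ∧ graphRank G = (α : ℕ∞) ∧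
    ∃ v, cornerRank G v = (α : ℕ∞) ∧ Dominates G v (stage G (α - 1))

/-- `G` realizes the vector `(x_α, …, x_1)` (written as the list `[x_α, …, x_1]`):
`G` is cop-win of corner rank `α` and for each `k`, `x_k` is the number of vertices
of corner rank `k`. -/
def Realizes (G : SimpleGraph V) (x : List ℕ) : Prop :=
  CopWin G ∧ graphRank G = (x.length : ℕ∞) ∧
  ∀ i : Fin x.length,
    x.get i = {v | cornerRank G v = ((x.length - (i : ℕ) : ℕ) : ℕ∞)}.ncard

/-- `G` r-realizes `x` (for `r ∈ {0,1}`): `G` realizes `x` and `G` is tp-r. -/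
def RRealizes (G : SimpleGraph V) (r : ℕ) (x : List ℕ) : Prop :=
  Realizes G x ∧ (Tp1 G ↔ r = 1)

/-- A vector is realizable if it is the rank cardinality vector of some finite cop-win graph. -/
def Realizable (x : List ℕ) : Prop :=
  ∃ (W : Type) (_ : Fintype W) (G : SimpleGraph W), Realizes G x

/-- A vector is r-realizable if some finite tp-r cop-win graph realizes it. -/
def RRealizable (r : ℕ) (x : List ℕ) : Prop :=
  ∃ (W : Type) (_ : Fintype W) (G : SimpleGraph W), RRealizes G r x

open Classical in
/-- The capture time of a cop-win graph: `cr(G) - r(G)`. -/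
noncomputable def captureTime (G : SimpleGraph V) : ℕ :=
  (graphRank G).toNat - (if Tp1 G then 1 else 0)

end CopsRobbers
namespace CopsRobbers
namespace Aux

variable {V : Type*}

/-- The stage-`n` predicate of the corner ranking procedure. -/
def Pred (G : SimpleGraph V) (n : ℕ) (v : V) : Prop :=
  StrictCorner G (stage G n) v ∨ (G.IsClique (stage G n) ∧ v ∈ stage G n)

lemma mem_closedNbhd_iff {G : SimpleGraph V} {S : Set V} {v x : V} :
    x ∈ closedNbhd G S v ↔ x ∈ S ∧ (x = v ∨ G.Adj x v) := Iff.rfl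

lemma self_mem_closedNbhd {G : SimpleGraph V} {S : Set V} {v : V} (hv : v ∈ S) :
    v ∈ closedNbhd G S v := ⟨hv, Or.inl rfl⟩

lemma mem_closedNbhd_symm {G : SimpleGraph V} {S : Set V} {v x : V} (hv : v ∈ S)
    (h : x ∈ closedNbhd G S v) : v ∈ closedNbhd G S x := by
  rcases h.2 with h' | h'
  · exact ⟨hv, Or.inl h'.symm⟩
  · exact ⟨hv, Or.inr h'.symm⟩

lemma closedNbhd_subset {G : SimpleGraph V} {S : Set V} (v : V) :
    closedNbhd G S v ⊆ S := fun _ h => h.1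

lemma closedNbhd_diff (G : SimpleGraph V) (S T : Set V) (v : V) :
    closedNbhd G (S \ T) v = closedNbhd G S v \ T := by
  ext x
  simp only [mem_closedNbhd_iff, Set.mem_diff]
  tauto

lemma stage_one (G : SimpleGraph V) : stage G 1 = Set.univ := rfl

lemma stage_two (G : SimpleGraph V) :
    stage G 2 = stage G 1 \ {v | StrictCorner G (stage G 1) v} := rfl

lemma stage_three (G : SimpleGraph V) :
    stage G 3 = stage G 2 \ {v | StrictCorner G (stage G 2) v} := rfl

lemma stage_four (G : SimpleGraph V) :
    stage G 4 = stage G 3 \ {v | StrictCorner G (stage G 3) v} := rfl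

lemma cornerRank_eq_iff {G : SimpleGraph V} {v : V} {n : ℕ} :
    cornerRank G v = (n : ℕ∞) ↔
      (1 ≤ n ∧ Pred G n v ∧ ∀ m, 1 ≤ m → m < n → ¬ Pred G m v) := by
  have hset : {k : ℕ∞ | ∃ m : ℕ, k = (m : ℕ∞) ∧ 1 ≤ m ∧ Pred G m v}
      = (fun m : ℕ => (m : ℕ∞)) '' {m : ℕ | 1 ≤ m ∧ Pred G m v} := by
    ext k
    constructor
    · rintro ⟨m, rfl, h1, h2⟩; exact ⟨m, ⟨h1, h2⟩, rfl⟩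
    · rintro ⟨m, ⟨h1, h2⟩, rfl⟩; exact ⟨m, rfl, h1, h2⟩
  have hcr : cornerRank G v
      = sInf ((fun m : ℕ => (m : ℕ∞)) '' {m : ℕ | 1 ≤ m ∧ Pred G m v}) := by
    rw [cornerRank, ← hset]; rfl
  constructor
  · intro h
    rw [hcr] at h
    by_cases hne : {m : ℕ | 1 ≤ m ∧ Pred G m v}.Nonempty
    · have hmem := Nat.sInf_mem hne
      have hval : sInf ((fun m : ℕ => (m : ℕ∞)) '' {m : ℕ | 1 ≤ m ∧ Pred G m v})
          = ((sInf {m : ℕ | 1 ≤ m ∧ Pred G m v} : ℕ) : ℕ∞) := by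
        apply le_antisymm
        · exact sInf_le ⟨_, hmem, rfl⟩
        · apply le_sInf
          rintro k ⟨m, hm, rfl⟩
          show ((sInf {m : ℕ | 1 ≤ m ∧ Pred G m v} : ℕ) : ℕ∞) ≤ (m : ℕ∞)
          exact_mod_cast Nat.sInf_le hm
      rw [hval] at h
      have heq : sInf {m : ℕ | 1 ≤ m ∧ Pred G m v} = n := by exact_mod_cast h
      refine ⟨heq ▸ hmem.1, heq ▸ hmem.2, fun m h1 hlt hP => ?_⟩
      have hmm : m ∈ {m : ℕ | 1 ≤ m ∧ Pred G m v} := ⟨h1, hP⟩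
      have := Nat.sInf_le hmm
      omega
    · rw [Set.not_nonempty_iff_eq_empty] at hne
      rw [hne, Set.image_empty, sInf_empty] at h
      exact absurd h.symm (by simp)
  · rintro ⟨h1, hP, hmin⟩
    rw [hcr]
    apply le_antisymm
    · exact sInf_le ⟨n, ⟨h1, hP⟩, rfl⟩
    · apply le_sInf
      rintro k ⟨m, ⟨hm1, hm2⟩, rfl⟩
      by_contra hlt
      push_neg at hlt
      have hmn : m < n := by exact_mod_cast hlt
      exact hmin m hm1 hmn hm2

lemma ncard_five [Finite V] {a b c d e : V}
    (hab : a ≠ b) (hac : a ≠ c) (had : a ≠ d) (hae : a ≠ e)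
    (hbc : b ≠ c) (hbd : b ≠ d) (hbe : b ≠ e)
    (hcd : c ≠ d) (hce : c ≠ e) (hde : d ≠ e) :
    ({a, b, c, d, e} : Set V).ncard = 5 := by
  rw [Set.ncard_insert_of_notMem (by simp [hab, hac, had, hae]),
    Set.ncard_insert_of_notMem (by simp [hbc, hbd, hbe]),
    Set.ncard_insert_of_notMem (by simp [hcd, hce]),
    Set.ncard_pair hde]

lemma master {W : Type} [Fintype W] (G : SimpleGraph W) (c k : ℕ)
    (hck : c = 4 ∨ (c = 5 ∧ k = 2)) : ¬ RRealizes G 0 [2, c, k, 1] := by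
  classical
  rintro ⟨⟨hCW, hGRlen, hcard⟩, hTpIff⟩
  have hTp : ¬ Tp1 G := fun h => by simpa using hTpIff.mp h
  have hGR : graphRank G = ((4 : ℕ) : ℕ∞) := by
    simpa using hGRlen
  have h4 : {v : W | cornerRank G v = ((4 : ℕ) : ℕ∞)}.ncard = 2 := by
    have h := hcard ⟨0, by norm_num⟩
    norm_num at h
    exact h.symm
  have h3 : {v : W | cornerRank G v = ((3 : ℕ) : ℕ∞)}.ncard = c := by
    have h := hcard ⟨1, by norm_num⟩
    norm_num at h
    exact h.symm
  have h2 : {v : W | cornerRank G v = ((2 : ℕ) : ℕ∞)}.ncard = k := by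
    have h := hcard ⟨2, by norm_num⟩
    norm_num at h
    exact h.symm
  have h1 : {v : W | cornerRank G v = ((1 : ℕ) : ℕ∞)}.ncard = 1 := by
    have h := hcard ⟨3, by norm_num⟩
    norm_num at h
    exact h.symm
  -- top and bottom vertices
  obtain ⟨a, b, hab, hX4⟩ := Set.ncard_eq_two.mp h4
  obtain ⟨u, hX1⟩ := Set.ncard_eq_one.mp h1
  have hcra : cornerRank G a = ((4 : ℕ) : ℕ∞) := by
    have : a ∈ {v : W | cornerRank G v = ((4 : ℕ) : ℕ∞)} := by rw [hX4]; simp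
    exact this
  have hcrb : cornerRank G b = ((4 : ℕ) : ℕ∞) := by
    have : b ∈ {v : W | cornerRank G v = ((4 : ℕ) : ℕ∞)} := by rw [hX4]; simp
    exact this
  have hcru : cornerRank G u = ((1 : ℕ) : ℕ∞) := by
    have : u ∈ {v : W | cornerRank G v = ((1 : ℕ) : ℕ∞)} := by rw [hX1]; simp
    exact this
  obtain ⟨-, hPa4, hnPa⟩ := cornerRank_eq_iff.mp hcra
  -- a survives to every stage below 4
  have ha2 : a ∈ stage G 2 := by
    rw [stage_two]
    exact ⟨trivial, fun hc => hnPa 1 le_rfl (by norm_num) (Or.inl hc)⟩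
  have ha3 : a ∈ stage G 3 := by
    rw [stage_three]
    exact ⟨ha2, fun hc => hnPa 2 (by norm_num) (by norm_num) (Or.inl hc)⟩
  -- no early cliques
  have hnc1 : ¬ G.IsClique (stage G 1) := fun h =>
    hnPa 1 le_rfl (by norm_num) (Or.inr ⟨h, trivial⟩)
  have hnc2 : ¬ G.IsClique (stage G 2) := fun h =>
    hnPa 2 (by norm_num) (by norm_num) (Or.inr ⟨h, ha2⟩)
  have hnc3 : ¬ G.IsClique (stage G 3) := fun h =>
    hnPa 3 (by norm_num) (by norm_num) (Or.inr ⟨h, ha3⟩)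
  -- characterization of corner ranks 1, 2, 3
  have hcr1_iff : ∀ v : W, cornerRank G v = ((1 : ℕ) : ℕ∞) ↔
      StrictCorner G (stage G 1) v := by
    intro v
    rw [cornerRank_eq_iff]
    constructor
    · rintro ⟨-, hP, -⟩
      rcases hP with h | h
      · exact h
      · exact absurd h.1 hnc1
    · intro h
      exact ⟨le_rfl, Or.inl h, fun m hm1 hm2 => by omega⟩
  have hcr2_iff : ∀ v : W, cornerRank G v = ((2 : ℕ) : ℕ∞) ↔
      StrictCorner G (stage G 2) v := by
    intro v
    rw [cornerRank_eq_iff]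
    constructor
    · rintro ⟨-, hP, -⟩
      rcases hP with h | h
      · exact h
      · exact absurd h.1 hnc2
    · intro h
      have hv2 : v ∈ stage G 2 := h.1
      refine ⟨by norm_num, Or.inl h, fun m hm1 hm2 hP => ?_⟩
      have hm : m = 1 := by omega
      subst hm
      rcases hP with h' | h'
      · rw [stage_two] at hv2
        exact hv2.2 h'
      · exact hnc1 h'.1
  have hcr3_iff : ∀ v : W, cornerRank G v = ((3 : ℕ) : ℕ∞) ↔
      StrictCorner G (stage G 3) v := by
    intro v
    rw [cornerRank_eq_iff]
    constructor
    · rintro ⟨-, hP, -⟩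
      rcases hP with h | h
      · exact h
      · exact absurd h.1 hnc3
    · intro h
      have hv3 : v ∈ stage G 3 := h.1
      have hv2 : v ∈ stage G 2 := by
        rw [stage_three] at hv3; exact hv3.1
      refine ⟨by norm_num, Or.inl h, fun m hm1 hm2 hP => ?_⟩
      have hm : m = 1 ∨ m = 2 := by omega
      rcases hm with hm | hm <;> subst hm
      · rcases hP with h' | h'
        · rw [stage_two] at hv2
          exact hv2.2 h'
        · exact hnc1 h'.1
      · rcases hP with h' | h'
        · rw [stage_three] at hv3
          exact hv3.2 h'
        · exact hnc2 h'.1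
  -- corner rank bounds
  have hcr_le : ∀ v : W, cornerRank G v ≤ ((4 : ℕ) : ℕ∞) := by
    intro v
    rw [← hGR]
    exact le_iSup (cornerRank G) v
  have hcr_nat : ∀ v : W, ∃ n : ℕ, cornerRank G v = (n : ℕ∞) ∧ 1 ≤ n ∧ n ≤ 4 := by
    intro v
    obtain ⟨n, hn⟩ := WithTop.ne_top_iff_exists.mp (hCW v)
    have hn' : cornerRank G v = (n : ℕ∞) := hn.symm
    refine ⟨n, hn', (cornerRank_eq_iff.mp hn').1, ?_⟩
    have h' := hcr_le v
    rw [hn'] at h'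
    exact_mod_cast h'
  -- stage 4 is exactly {a, b}
  have hcr4_iff : ∀ v : W, cornerRank G v = ((4 : ℕ) : ℕ∞) ↔ v ∈ stage G 4 := by
    intro v
    constructor
    · intro hv
      obtain ⟨-, -, hmin⟩ := cornerRank_eq_iff.mp hv
      have hv2 : v ∈ stage G 2 := by
        rw [stage_two]
        exact ⟨trivial, fun hc => hmin 1 le_rfl (by norm_num) (Or.inl hc)⟩
      have hv3 : v ∈ stage G 3 := by
        rw [stage_three]
        exact ⟨hv2, fun hc => hmin 2 (by norm_num) (by norm_num) (Or.inl hc)⟩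
      rw [stage_four]
      exact ⟨hv3, fun hc => hmin 3 (by norm_num) (by norm_num) (Or.inl hc)⟩
    · intro hv
      obtain ⟨n, hn, hn1, hn4⟩ := hcr_nat v
      have hv3 : v ∈ stage G 3 := by rw [stage_four] at hv; exact hv.1
      have hv2 : v ∈ stage G 2 := by rw [stage_three] at hv3; exact hv3.1
      obtain ⟨-, hP, -⟩ := cornerRank_eq_iff.mp hn
      have hn4' : n = 4 := by
        by_contra hne
        have : n = 1 ∨ n = 2 ∨ n = 3 := by omega
        rcases this with rfl | rfl | rfl
        · rcases hP with h' | h'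
          · rw [stage_two] at hv2; exact hv2.2 h'
          · exact hnc1 h'.1
        · rcases hP with h' | h'
          · rw [stage_three] at hv3; exact hv3.2 h'
          · exact hnc2 h'.1
        · rcases hP with h' | h'
          · rw [stage_four] at hv; exact hv.2 h'
          · exact hnc3 h'.1
      rw [hn4'] at hn
      exact hn
  have hstage4 : stage G 4 = {a, b} := by
    ext v
    rw [← hcr4_iff v]
    have : v ∈ {v : W | cornerRank G v = ((4 : ℕ) : ℕ∞)} ↔ v ∈ ({a, b} : Set W) := by
      rw [hX4]
    exact this
  -- stage 4 is a clique, in particular a and b are adjacent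
  have hAdjab : G.Adj a b := by
    have ha4 : a ∈ stage G 4 := (hcr4_iff a).mp hcra
    have hb4 : b ∈ stage G 4 := (hcr4_iff b).mp hcrb
    rcases hPa4 with h | h
    · -- a is a strict corner of stage 4 : impossible
      exfalso
      obtain ⟨-, w, hw4, hwne, hss⟩ := h
      have hw : w = b := by
        rw [hstage4] at hw4
        rcases hw4 with h' | h'
        · exact absurd h' hwne
        · exact h'
      rw [hw] at hss hwne
      have haw : a ∈ closedNbhd G (stage G 4) b := hss.subset (self_mem_closedNbhd ha4)
      have hba : b ∈ closedNbhd G (stage G 4) a := mem_closedNbhd_symm hb4 haw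
      have : closedNbhd G (stage G 4) b ⊆ closedNbhd G (stage G 4) a := by
        intro t ht
        have ht4 : t ∈ stage G 4 := ht.1
        rw [hstage4] at ht4
        rcases ht4 with rfl | rfl
        · exact self_mem_closedNbhd ha4
        · exact hba
      exact (not_subset_of_ssubset hss) this
    · exact h.1 ((hcr4_iff a).mp hcra) ((hcr4_iff b).mp hcrb) hab
  -- corner sets at each stage
  have hcorner1 : {v : W | StrictCorner G (stage G 1) v} = {u} := by
    rw [← hX1]
    ext v
    simp only [Set.mem_setOf_eq]
    exact (hcr1_iff v).symm
  have hcorner2 : {v : W | StrictCorner G (stage G 2) v}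
      = {v : W | cornerRank G v = ((2 : ℕ) : ℕ∞)} := by
    ext v
    simp only [Set.mem_setOf_eq]
    exact (hcr2_iff v).symm
  have hcorner3 : {v : W | StrictCorner G (stage G 3) v}
      = {v : W | cornerRank G v = ((3 : ℕ) : ℕ∞)} := by
    ext v
    simp only [Set.mem_setOf_eq]
    exact (hcr3_iff v).symm
  set X2 := {v : W | StrictCorner G (stage G 2) v} with hX2def
  set C := {v : W | StrictCorner G (stage G 3) v} with hCdef
  have hX2iff : ∀ z : W, z ∈ X2 ↔ StrictCorner G (stage G 2) z := fun z => Iff.rfl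
  have hCiff : ∀ z : W, z ∈ C ↔ StrictCorner G (stage G 3) z := fun z => Iff.rfl
  have hX2card : X2.ncard = k := by rw [hcorner2]; exact h2
  have hCcard : C.ncard = c := by rw [hcorner3]; exact h3
  have hS2eq : stage G 2 = Set.univ \ {u} := by
    rw [stage_two, hcorner1, stage_one]
  have hS3eq : stage G 3 = stage G 2 \ X2 := by
    rw [stage_three]
  have hS4eq : stage G 4 = stage G 3 \ C := by
    rw [stage_four]
  have hS2mem : ∀ {x : W}, x ∈ stage G 3 → x ∈ stage G 2 := fun hx => (hS3eq ▸ hx).1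
  have hS4sub3 : ∀ {x : W}, x ∈ stage G 4 → x ∈ stage G 3 := fun hx => (hS4eq ▸ hx).1
  have hX2S2 : ∀ {z : W}, z ∈ X2 → z ∈ stage G 2 := fun hz => hz.1
  have hCS3 : ∀ {x : W}, x ∈ C → x ∈ stage G 3 := fun hx => hx.1
  have hmemS3cases : ∀ x : W, x ∈ stage G 3 → x ∈ stage G 4 ∨ x ∈ C := by
    intro x hx
    by_cases hc : x ∈ C
    · exact Or.inr hc
    · left; rw [hS4eq]; exact ⟨hx, hc⟩
  have hX2nS3 : ∀ {z : W}, z ∈ X2 → z ∉ stage G 3 := by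
    intro z hz hz3
    rw [hS3eq] at hz3
    exact hz3.2 hz
  -- neighbourhood rewriting
  have hN2 : ∀ x : W, closedNbhd G (stage G 2) x = closedNbhd G (stage G 1) x \ {u} := by
    intro x
    rw [hS2eq, closedNbhd_diff, stage_one]
  have hN3 : ∀ x : W, closedNbhd G (stage G 3) x = closedNbhd G (stage G 2) x \ X2 := by
    intro x
    rw [hS3eq, closedNbhd_diff]
  -- vertices surviving a stage are not corners of it
  have hnSC2 : ∀ {x : W}, x ∈ stage G 3 → ¬ StrictCorner G (stage G 2) x := by
    intro x hx hsc
    exact hX2nS3 hsc hx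
  have hnSC1 : ∀ {x : W}, x ∈ stage G 2 → ¬ StrictCorner G (stage G 1) x := by
    intro x hx hsc
    have hx1 : x ∈ ({u} : Set W) := by rw [← hcorner1]; exact hsc
    rw [hS2eq] at hx
    exact hx.2 hx1
  have huS2 : u ∉ stage G 2 := by rw [hS2eq]; simp
  -- the unique bottom corner u breaks every stage-2 domination
  have hulem : ∀ v ∈ X2, ∀ w ∈ stage G 2,
      closedNbhd G (stage G 2) v ⊂ closedNbhd G (stage G 2) w →
      G.Adj u v ∧ ¬ G.Adj u w ∧ u ≠ w := by
    intro v hv w hw hss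
    have hvS2 : v ∈ stage G 2 := hX2S2 hv
    have hvu : v ≠ u := fun h => huS2 (h ▸ hvS2)
    have hwu : w ≠ u := fun h => huS2 (h ▸ hw)
    have hwv : w ≠ v := fun h => ssubset_irrefl _ (h ▸ hss)
    by_cases hgood : u ∈ closedNbhd G (stage G 1) v ∧ u ∉ closedNbhd G (stage G 1) w
    · obtain ⟨hu1, hu2⟩ := hgood
      have hadj : G.Adj u v := by
        rcases hu1.2 with h | h
        · exact absurd h.symm hvu
        · exact h
      refine ⟨hadj, ?_, fun h => hwu h.symm⟩
      intro hadj'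
      exact hu2 ⟨trivial, Or.inr hadj'⟩
    · exfalso
      push_neg at hgood
      apply hnSC1 hvS2
      refine ⟨trivial, w, trivial, hwv, ?_⟩
      rw [ssubset_iff_subset_not_subset]
      constructor
      · intro t ht
        by_cases htu : t = u
        · subst htu
          exact hgood ht
        · have ht2 : t ∈ closedNbhd G (stage G 2) v := by
            rw [hN2]; exact ⟨ht, htu⟩
          have := hss.subset ht2
          rw [hN2] at this
          exact this.1
      · intro hrev
        obtain ⟨t, htw, htv⟩ := Set.exists_of_ssubset hss
        have htw1 : t ∈ closedNbhd G (stage G 1) w := by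
          rw [hN2] at htw; exact htw.1
        have h1 := hrev htw1
        have htu : t ≠ u := by
          intro h
          rw [hN2] at htw
          exact htw.2 (by rw [h]; rfl)
        apply htv
        rw [hN2]
        exact ⟨h1, htu⟩
  -- every stage-3 domination is broken by some vertex of X2
  have hbreak : ∀ x ∈ stage G 3, ∀ y ∈ stage G 3,
      closedNbhd G (stage G 3) x ⊂ closedNbhd G (stage G 3) y →
      ∃ z ∈ X2, G.Adj z x ∧ ¬ G.Adj z y ∧ z ≠ y := by
    intro x hx y hy hss
    have hxy : y ≠ x := fun h => ssubset_irrefl _ (h ▸ hss)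
    have hnsub : ¬ (closedNbhd G (stage G 2) x ⊆ closedNbhd G (stage G 2) y) := by
      intro hsub
      apply hnSC2 hx
      refine ⟨hS2mem hx, y, hS2mem hy, hxy, ?_⟩
      rw [ssubset_iff_subset_not_subset]
      refine ⟨hsub, fun hrev => ?_⟩
      obtain ⟨t, hty, htx⟩ := Set.exists_of_ssubset hss
      have hty2 : t ∈ closedNbhd G (stage G 2) y := by
        rw [hN3] at hty; exact hty.1
      have htx2 := hrev hty2
      apply htx
      rw [hN3]
      refine ⟨htx2, ?_⟩
      intro htX2
      exact hX2nS3 htX2 (closedNbhd_subset y hty)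
    obtain ⟨z, hzx, hzy⟩ := Set.not_subset.mp hnsub
    have hzS2 : z ∈ stage G 2 := hzx.1
    have hzX2 : z ∈ X2 := by
      by_contra hzn
      apply hzy
      have hz3 : z ∈ closedNbhd G (stage G 3) x := by rw [hN3]; exact ⟨hzx, hzn⟩
      have hz3' := hss.subset hz3
      rw [hN3] at hz3'
      exact hz3'.1
    have hzne : z ≠ x := fun h => hX2nS3 hzX2 (h ▸ hx)
    have hadj : G.Adj z x := by
      rcases hzx.2 with h | h
      · exact absurd h hzne
      · exact h
    refine ⟨z, hzX2, hadj, ?_, fun h => hX2nS3 hzX2 (h ▸ hy)⟩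
    intro hadj'
    exact hzy ⟨hzS2, Or.inr hadj'⟩
  -- every X2 vertex is dominated (at stage 2) by a stage-3 vertex
  have hdomS3 : ∀ z ∈ X2, ∃ w ∈ stage G 3,
      closedNbhd G (stage G 2) z ⊂ closedNbhd G (stage G 2) w := by
    intro z hz
    obtain ⟨hzS2, w, hwS2, hwne, hss⟩ := (hX2iff z).mp hz
    by_cases hw3 : w ∈ stage G 3
    · exact ⟨w, hw3, hss⟩
    · exfalso
      have hwX2 : w ∈ X2 := by
        by_contra hwn
        exact hw3 (by rw [hS3eq]; exact ⟨hwS2, hwn⟩)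
      obtain ⟨hwS2', w2, hw2S2, hw2ne, hss2⟩ := (hX2iff w).mp hwX2
      have hna := (hulem z hz w hwS2 hss).2.1
      have hya := (hulem w hwX2 w2 hw2S2 hss2).1
      exact hna hya
  -- every stage-3 corner is dominated by a or by b
  have hmax : ∀ x ∈ C, closedNbhd G (stage G 3) x ⊂ closedNbhd G (stage G 3) a ∨
      closedNbhd G (stage G 3) x ⊂ closedNbhd G (stage G 3) b := by
    intro x hx
    obtain ⟨hxS3, w0, hw0S3, hw0ne, hss0⟩ := (hCiff x).mp hx
    have hDne : ({y | y ∈ stage G 3 ∧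
        closedNbhd G (stage G 3) x ⊂ closedNbhd G (stage G 3) y} : Set W).Nonempty :=
      ⟨w0, hw0S3, hss0⟩
    obtain ⟨y, hyD, hymax⟩ := Set.Finite.exists_maximalFor
      (fun s => (closedNbhd G (stage G 3) s).ncard)
      {y | y ∈ stage G 3 ∧ closedNbhd G (stage G 3) x ⊂ closedNbhd G (stage G 3) y}
      (Set.toFinite _) hDne
    obtain ⟨hyS3, hyss⟩ := hyD
    have hySC : ¬ StrictCorner G (stage G 3) y := by
      rintro ⟨hyS3', w', hw'S3, hw'ne, hss'⟩
      have hw'D : w' ∈ {y | y ∈ stage G 3 ∧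
          closedNbhd G (stage G 3) x ⊂ closedNbhd G (stage G 3) y} :=
        ⟨hw'S3, hyss.trans hss'⟩
      have hlt : (closedNbhd G (stage G 3) y).ncard
          < (closedNbhd G (stage G 3) w').ncard :=
        Set.ncard_lt_ncard hss' (Set.toFinite _)
      exact absurd (hymax hw'D hlt.le) (not_le.mpr hlt)
    have hyS4 : y ∈ stage G 4 := by
      rcases hmemS3cases y hyS3 with h | h
      · exact h
      · exact absurd h hySC
    rw [hstage4, Set.mem_insert_iff, Set.mem_singleton_iff] at hyS4
    rcases hyS4 with rfl | rfl
    · exact Or.inl hyss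
    · exact Or.inr hyss
  -- neither a nor b dominates stage 3 (the graph is tp0)
  have hndom : ∀ v : W, cornerRank G v = ((4 : ℕ) : ℕ∞) → ¬ Dominates G v (stage G 3) := by
    intro v hv hd
    refine hTp ⟨4, by norm_num, ?_, v, ?_, ?_⟩
    · exact_mod_cast hGR
    · exact_mod_cast hv
    · exact hd
  have hb3 : b ∈ stage G 3 := hS4sub3 ((hcr4_iff b).mp hcrb)
  -- q : a stage-3 corner dominated by a, not in the closed neighbourhood of b
  obtain ⟨q, hqS3, hqprop⟩ : ∃ q ∈ stage G 3, ¬ (q = b ∨ G.Adj b q) := by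
    by_contra hcon
    push_neg at hcon
    refine hndom b hcrb ?_
    intro x hx
    have h := hcon x hx
    tauto
  have hqne_b : q ≠ b := fun h => hqprop (Or.inl h)
  have hqnadjb : ¬ G.Adj b q := fun h => hqprop (Or.inr h)
  have hqnb : q ∉ closedNbhd G (stage G 3) b := by
    rintro ⟨-, h | h⟩
    · exact hqne_b h
    · exact hqnadjb h.symm
  have hqC : q ∈ C := by
    rcases hmemS3cases q hqS3 with h | h
    · exfalso
      rw [hstage4, Set.mem_insert_iff, Set.mem_singleton_iff] at h
      rcases h with rfl | rfl
      · exact hqnadjb hAdjab.symm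
      · exact hqne_b rfl
    · exact h
  have hqA : closedNbhd G (stage G 3) q ⊂ closedNbhd G (stage G 3) a := by
    rcases hmax q hqC with h | h
    · exact h
    · exact absurd (h.subset (self_mem_closedNbhd hqS3)) hqnb
  -- p : a stage-3 corner dominated by b, not in the closed neighbourhood of a
  obtain ⟨p, hpS3, hpprop⟩ : ∃ p ∈ stage G 3, ¬ (p = a ∨ G.Adj a p) := by
    by_contra hcon
    push_neg at hcon
    refine hndom a hcra ?_
    intro x hx
    have h := hcon x hx
    tauto
  have hpne_a : p ≠ a := fun h => hpprop (Or.inl h)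
  have hpnadja : ¬ G.Adj a p := fun h => hpprop (Or.inr h)
  have hpna : p ∉ closedNbhd G (stage G 3) a := by
    rintro ⟨-, h | h⟩
    · exact hpne_a h
    · exact hpnadja h.symm
  have hpC : p ∈ C := by
    rcases hmemS3cases p hpS3 with h | h
    · exfalso
      rw [hstage4, Set.mem_insert_iff, Set.mem_singleton_iff] at h
      rcases h with rfl | rfl
      · exact hpne_a rfl
      · exact hpnadja hAdjab
    · exact h
  have hpB : closedNbhd G (stage G 3) p ⊂ closedNbhd G (stage G 3) b := by
    rcases hmax p hpC with h | h
    · exact absurd (h.subset (self_mem_closedNbhd hpS3)) hpna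
    · exact h
  -- neighbours of q avoid the b-side, neighbours of p avoid the a-side
  have hqnbr : ∀ x, x ∈ closedNbhd G (stage G 3) q →
      ¬ (closedNbhd G (stage G 3) x ⊂ closedNbhd G (stage G 3) b) ∧ x ≠ b := by
    intro x hx
    have hq_x : q ∈ closedNbhd G (stage G 3) x := mem_closedNbhd_symm hqS3 hx
    constructor
    · intro hss
      exact hqnb (hss.subset hq_x)
    · rintro rfl
      exact hqnb hq_x
  have hpnbr : ∀ x, x ∈ closedNbhd G (stage G 3) p →
      ¬ (closedNbhd G (stage G 3) x ⊂ closedNbhd G (stage G 3) a) ∧ x ≠ a := by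
    intro x hx
    have hp_x : p ∈ closedNbhd G (stage G 3) x := mem_closedNbhd_symm hpS3 hx
    constructor
    · intro hss
      exact hpna (hss.subset hp_x)
    · rintro rfl
      exact hpna hp_x
  -- breakers and their stage-3 dominators
  obtain ⟨zq, hzqX2, hzqadjq, hzqnadja, hzqneqa⟩ := hbreak q hqS3 a ha3 hqA
  obtain ⟨wq, hwqS3, hwqss⟩ := hdomS3 zq hzqX2
  obtain ⟨zp, hzpX2, hzpadjp, hzpnadjb, hzpneqb⟩ := hbreak p hpS3 b hb3 hpB
  obtain ⟨wp, hwpS3, hwpss⟩ := hdomS3 zp hzpX2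
  -- u is adjacent to every X2-vertex
  have huadjX2 : ∀ z ∈ X2, G.Adj u z := by
    intro z hz
    obtain ⟨w', hw'S3, hss'⟩ := hdomS3 z hz
    exact (hulem z hz w' (hS2mem hw'S3) hss').1
  -- the vertex r : a stage-3 vertex adjacent to all of X2
  obtain ⟨r, hrS3, hradj⟩ : ∃ r ∈ stage G 3, ∀ z ∈ X2, G.Adj z r := by
    obtain ⟨-, wst, -, hwstne, hwstss⟩ := (hcr1_iff u).mp hcru
    have hwstS2 : wst ∈ stage G 2 := by
      rw [hS2eq]
      exact ⟨trivial, fun h => hwstne h⟩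
    by_cases hw3 : wst ∈ stage G 3
    · refine ⟨wst, hw3, fun z hz => ?_⟩
      have hz1 : z ∈ closedNbhd G (stage G 1) u :=
        ⟨trivial, Or.inr (huadjX2 z hz).symm⟩
      have hz2 := hwstss.subset hz1
      rcases hz2.2 with h | h
      · exact absurd (h ▸ hw3) (hX2nS3 hz)
      · exact h
    · have hwX2 : wst ∈ X2 := by
        by_contra hwn
        exact hw3 (by rw [hS3eq]; exact ⟨hwstS2, hwn⟩)
      obtain ⟨wb, hwbS3, hwbss⟩ := hdomS3 wst hwX2
      refine ⟨wb, hwbS3, fun z hz => ?_⟩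
      have hz1 : z ∈ closedNbhd G (stage G 1) wst :=
        hwstss.subset ⟨trivial, Or.inr (huadjX2 z hz).symm⟩
      have hz2 : z ∈ closedNbhd G (stage G 2) wst := by
        rw [hN2]
        exact ⟨hz1, fun h => huS2 (h ▸ hX2S2 hz)⟩
      have hz3 := hwbss.subset hz2
      rcases hz3.2 with h | h
      · exact absurd (h ▸ hwbS3) (hX2nS3 hz)
      · exact h
  -- no X2-vertex is adjacent to both q and p
  have hnoBoth : ∀ z ∈ X2, G.Adj z q → G.Adj z p → False := by
    intro z hz h1 h2
    obtain ⟨w', hw'S3, hss'⟩ := hdomS3 z hz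
    have hq2 : q ∈ closedNbhd G (stage G 2) z := ⟨hS2mem hqS3, Or.inr h1.symm⟩
    have hq3 : q ∈ closedNbhd G (stage G 3) w' := by
      rw [hN3]
      exact ⟨hss'.subset hq2, fun h => hX2nS3 h hqS3⟩
    have hw'q := mem_closedNbhd_symm hw'S3 hq3
    have hWb := hqnbr w' hw'q
    have hp2 : p ∈ closedNbhd G (stage G 2) z := ⟨hS2mem hpS3, Or.inr h2.symm⟩
    have hp3 : p ∈ closedNbhd G (stage G 3) w' := by
      rw [hN3]
      exact ⟨hss'.subset hp2, fun h => hX2nS3 h hpS3⟩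
    have hw'p := mem_closedNbhd_symm hw'S3 hp3
    have hWa := hpnbr w' hw'p
    rcases hmemS3cases w' hw'S3 with h | h
    · rw [hstage4, Set.mem_insert_iff, Set.mem_singleton_iff] at h
      rcases h with rfl | rfl
      · exact hWa.2 rfl
      · exact hWb.2 rfl
    · rcases hmax w' h with hss | hss
      · exact hWa.1 hss
      · exact hWb.1 hss
  have hcard45 : C.ncard = 4 ∨ (C.ncard = 5 ∧ X2.ncard = 2) := by
    rcases hck with rfl | ⟨rfl, rfl⟩
    · exact Or.inl hCcard
    · exact Or.inr ⟨hCcard, hX2card⟩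
  have hmemcases : ∀ x : W, x ∈ stage G 3 → x = a ∨ x = b ∨ x ∈ C := by
    intro x hx
    rcases hmemS3cases x hx with h | h
    · rw [hstage4, Set.mem_insert_iff, Set.mem_singleton_iff] at h
      exact h.imp id Or.inl
    · exact Or.inr (Or.inr h)
  -- the big side-symmetric killing argument
  have killSide : ∀ a' b' q' p' zq' zp' wq' wp' : W,
      stage G 4 = {a', b'} →
      q' ∈ stage G 3 → p' ∈ stage G 3 →
      closedNbhd G (stage G 3) q' ⊂ closedNbhd G (stage G 3) a' →
      closedNbhd G (stage G 3) p' ⊂ closedNbhd G (stage G 3) b' →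
      q' ∉ closedNbhd G (stage G 3) b' →
      p' ∉ closedNbhd G (stage G 3) a' →
      (∀ x ∈ C, closedNbhd G (stage G 3) x ⊂ closedNbhd G (stage G 3) a' ∨
        closedNbhd G (stage G 3) x ⊂ closedNbhd G (stage G 3) b') →
      (∀ z ∈ X2, G.Adj z q' → G.Adj z p' → False) →
      zq' ∈ X2 → G.Adj zq' q' → ¬ G.Adj zq' a' →
      zp' ∈ X2 → G.Adj zp' p' → ¬ G.Adj zp' b' →
      wq' ∈ stage G 3 → closedNbhd G (stage G 2) zq' ⊂ closedNbhd G (stage G 2) wq' →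
      wp' ∈ stage G 3 → closedNbhd G (stage G 2) zp' ⊂ closedNbhd G (stage G 2) wp' →
      G.Adj r q' → False := by
    intro a' b' q' p' zq' zp' wq' wp' h4' hq3 hp3 hqA' hpB' hqnb' hpna' hmax' hnB
      hzqX hzqq hzqa hzpX hzpp hzpb hwq3 hwqss' hwp3 hwpss' hrq'
    have ha'3 : a' ∈ stage G 3 := hS4sub3 (by rw [h4']; exact Set.mem_insert _ _)
    have hb'3 : b' ∈ stage G 3 := hS4sub3 (by rw [h4']; exact Set.mem_insert_of_mem _ rfl)
    have hmemcases' : ∀ x : W, x ∈ stage G 3 → x = a' ∨ x = b' ∨ x ∈ C := by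
      intro x hx
      rcases hmemS3cases x hx with h | h
      · rw [h4', Set.mem_insert_iff, Set.mem_singleton_iff] at h
        exact h.imp id Or.inl
      · exact Or.inr (Or.inr h)
    have hq'nbr : ∀ x, x ∈ closedNbhd G (stage G 3) q' →
        ¬ (closedNbhd G (stage G 3) x ⊂ closedNbhd G (stage G 3) b') ∧ x ≠ b' := by
      intro x hx
      have hq_x : q' ∈ closedNbhd G (stage G 3) x := mem_closedNbhd_symm hq3 hx
      refine ⟨fun hss => hqnb' (hss.subset hq_x), ?_⟩
      rintro rfl
      exact hqnb' hq_x
    have hp'nbr : ∀ x, x ∈ closedNbhd G (stage G 3) p' →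
        ¬ (closedNbhd G (stage G 3) x ⊂ closedNbhd G (stage G 3) a') ∧ x ≠ a' := by
      intro x hx
      have hp_x : p' ∈ closedNbhd G (stage G 3) x := mem_closedNbhd_symm hp3 hx
      refine ⟨fun hss => hpna' (hss.subset hp_x), ?_⟩
      rintro rfl
      exact hpna' hp_x
    -- facts about wq'
    have hq'N2zq : q' ∈ closedNbhd G (stage G 2) zq' := ⟨hS2mem hq3, Or.inr hzqq.symm⟩
    have hq'N3wq : q' ∈ closedNbhd G (stage G 3) wq' := by
      rw [hN3]
      exact ⟨hwqss'.subset hq'N2zq, fun h => hX2nS3 h hq3⟩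
    have hwqN3q' : wq' ∈ closedNbhd G (stage G 3) q' := mem_closedNbhd_symm hwq3 hq'N3wq
    have hwqnbB := hq'nbr wq' hwqN3q'
    have hzqadjwq : G.Adj zq' wq' := by
      have hz := hwqss'.subset (self_mem_closedNbhd (hX2S2 hzqX))
      rcases hz.2 with h | h
      · exact absurd (h ▸ hwq3) (hX2nS3 hzqX)
      · exact h
    have hwqnea : wq' ≠ a' := fun h => hzqa (by rw [← h]; exact hzqadjwq)
    have hwqC : wq' ∈ C := by
      rcases hmemcases' wq' hwq3 with h | h | h
      · exact absurd h hwqnea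
      · exact absurd h hwqnbB.2
      · exact h
    have hwqA : closedNbhd G (stage G 3) wq' ⊂ closedNbhd G (stage G 3) a' :=
      (hmax' wq' hwqC).resolve_right hwqnbB.1
    have hrN2zq : r ∈ closedNbhd G (stage G 2) zq' :=
      ⟨hS2mem hrS3, Or.inr (hradj zq' hzqX).symm⟩
    have hrN3wq : r ∈ closedNbhd G (stage G 3) wq' := by
      rw [hN3]
      exact ⟨hwqss'.subset hrN2zq, fun h => hX2nS3 h hrS3⟩
    have hrN3a' : r ∈ closedNbhd G (stage G 3) a' := hwqA.subset hrN3wq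
    have ha'N3r : a' ∈ closedNbhd G (stage G 3) r := mem_closedNbhd_symm ha'3 hrN3a'
    -- facts about wp'
    have hp'N2zp : p' ∈ closedNbhd G (stage G 2) zp' := ⟨hS2mem hp3, Or.inr hzpp.symm⟩
    have hp'N3wp : p' ∈ closedNbhd G (stage G 3) wp' := by
      rw [hN3]
      exact ⟨hwpss'.subset hp'N2zp, fun h => hX2nS3 h hp3⟩
    have hwpN3p' : wp' ∈ closedNbhd G (stage G 3) p' := mem_closedNbhd_symm hwp3 hp'N3wp
    have hwpnbA := hp'nbr wp' hwpN3p'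
    have hzpadjwp : G.Adj zp' wp' := by
      have hz := hwpss'.subset (self_mem_closedNbhd (hX2S2 hzpX))
      rcases hz.2 with h | h
      · exact absurd (h ▸ hwp3) (hX2nS3 hzpX)
      · exact h
    have hwpneb : wp' ≠ b' := fun h => hzpb (by rw [← h]; exact hzpadjwp)
    have hwpC : wp' ∈ C := by
      rcases hmemcases' wp' hwp3 with h | h | h
      · exact absurd h hwpnbA.2
      · exact absurd h hwpneb
      · exact h
    have hwpB : closedNbhd G (stage G 3) wp' ⊂ closedNbhd G (stage G 3) b' :=
      (hmax' wp' hwpC).resolve_left hwpnbA.1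
    have hrN2zp : r ∈ closedNbhd G (stage G 2) zp' :=
      ⟨hS2mem hrS3, Or.inr (hradj zp' hzpX).symm⟩
    have hrN3wp : r ∈ closedNbhd G (stage G 3) wp' := by
      rw [hN3]
      exact ⟨hwpss'.subset hrN2zp, fun h => hX2nS3 h hrS3⟩
    -- facts about r
    have hrN3q' : r ∈ closedNbhd G (stage G 3) q' := ⟨hrS3, Or.inr hrq'⟩
    have hrnbB := hq'nbr r hrN3q'
    have hq'N3r : q' ∈ closedNbhd G (stage G 3) r := mem_closedNbhd_symm hq3 hrN3q'
    have hrnea : r ≠ a' := fun h => hzqa (by rw [← h]; exact hradj zq' hzqX)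
    have hrC : r ∈ C := by
      rcases hmemcases' r hrS3 with h | h | h
      · exact absurd h hrnea
      · exact absurd h hrnbB.2
      · exact h
    have hrA : closedNbhd G (stage G 3) r ⊂ closedNbhd G (stage G 3) a' :=
      (hmax' r hrC).resolve_right hrnbB.1
    have hrwp : G.Adj r wp' := by
      rcases hrN3wp.2 with h | h
      · exfalso
        apply hrnbB.1
        rw [h]
        exact hwpB
      · exact h
    have hwpN3r : wp' ∈ closedNbhd G (stage G 3) r := ⟨hwp3, Or.inr hrwp.symm⟩
    have hwpnotq' : wp' ∉ closedNbhd G (stage G 3) q' := fun h => (hq'nbr wp' h).1 hwpB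
    have hwpnep' : wp' ≠ p' := by
      rintro rfl
      exact (hp'nbr r hrN3wp).1 hrA
    have hq'C : q' ∈ C := by
      rcases hmemcases' q' hq3 with h | h | h
      · exfalso
        rw [h] at hqA'
        exact ssubset_irrefl _ hqA'
      · exfalso
        apply hqnb'
        rw [← h]
        exact self_mem_closedNbhd hq3
      · exact h
    have hp'C : p' ∈ C := by
      rcases hmemcases' p' hp3 with h | h | h
      · exfalso
        apply hpna'
        rw [← h]
        exact self_mem_closedNbhd hp3
      · exfalso
        rw [h] at hpB'
        exact ssubset_irrefl _ hpB'
      · exact h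
    have hq'nep' : q' ≠ p' := by
      rintro rfl
      exact (hq'nbr q' (self_mem_closedNbhd hq3)).1 hpB'
    have hq'ner : q' ≠ r := hrq'.ne'
    have hq'newp : q' ≠ wp' := fun h => hwpnotq' (by rw [← h]; exact self_mem_closedNbhd hq3)
    have hp'ner : p' ≠ r := fun h => hpna' (by rw [h]; exact hrN3a')
    -- main dichotomy
    by_cases hsub : ∀ x ∈ closedNbhd G (stage G 3) q', x ∈ closedNbhd G (stage G 3) r
    · have hss : closedNbhd G (stage G 3) q' ⊂ closedNbhd G (stage G 3) r := by
        rw [ssubset_iff_subset_not_subset]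
        exact ⟨hsub, fun hrev => hwpnotq' (hrev hwpN3r)⟩
      obtain ⟨z, hzX, hzadj, hznadj, -⟩ := hbreak q' hq3 r hrS3 hss
      exact hznadj (hradj z hzX)
    · push_neg at hsub
      obtain ⟨x, hxq', hxnr⟩ := hsub
      have hxS3 : x ∈ stage G 3 := closedNbhd_subset q' hxq'
      have hxnbB := hq'nbr x hxq'
      have hxnea' : x ≠ a' := fun h => hxnr (by rw [h]; exact ha'N3r)
      have hxC : x ∈ C := by
        rcases hmemcases' x hxS3 with h | h | h
        · exact absurd h hxnea'
        · exact absurd h hxnbB.2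
        · exact h
      have hxA : closedNbhd G (stage G 3) x ⊂ closedNbhd G (stage G 3) a' :=
        (hmax' x hxC).resolve_right hxnbB.1
      have hxneq' : x ≠ q' := fun h => hxnr (by rw [h]; exact hq'N3r)
      have hxner : x ≠ r := fun h => hxnr (by rw [h]; exact self_mem_closedNbhd hrS3)
      have hxnep' : x ≠ p' := by
        rintro rfl
        exact hpna' (hqA'.subset hxq')
      have hxnewp : x ≠ wp' := fun h => hwpnotq' (by rw [← h]; exact hxq')
      have h5sub : ({q', p', r, wp', x} : Set W) ⊆ C := by
        intro t ht
        simp only [Set.mem_insert_iff, Set.mem_singleton_iff] at ht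
        rcases ht with rfl | rfl | rfl | rfl | rfl
        · exact hq'C
        · exact hp'C
        · exact hrC
        · exact hwpC
        · exact hxC
      have h5card : ({q', p', r, wp', x} : Set W).ncard = 5 :=
        ncard_five hq'nep' hq'ner hq'newp hxneq'.symm hp'ner hwpnep'.symm hxnep'.symm
          hrwp.ne hxner.symm hxnewp.symm
      rcases hcard45 with h4c | ⟨h5c, hk2⟩
      · have hle := Set.ncard_le_ncard h5sub (Set.toFinite C)
        rw [h5card, h4c] at hle
        omega
      · have hCeq : C = {q', p', r, wp', x} :=
          (Set.eq_of_subset_of_ncard_le h5sub (by rw [h5c, h5card]) (Set.toFinite C)).symm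
        have hzne : zq' ≠ zp' := by
          rintro rfl
          exact hnB zq' hzqX hzqq hzpp
        have hX2eq : X2 = {zq', zp'} := by
          refine (Set.eq_of_subset_of_ncard_le ?_ ?_ (Set.toFinite X2)).symm
          · intro t ht
            simp only [Set.mem_insert_iff, Set.mem_singleton_iff] at ht
            rcases ht with rfl | rfl
            · exact hzqX
            · exact hzpX
          · rw [hk2, Set.ncard_pair hzne]
        have hb'N3wp : b' ∈ closedNbhd G (stage G 3) wp' :=
          mem_closedNbhd_symm hb'3 (hwpB.subset (self_mem_closedNbhd hwp3))
        have hsubp : closedNbhd G (stage G 3) p' ⊆ closedNbhd G (stage G 3) wp' := by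
          intro y hy
          have hyS3 : y ∈ stage G 3 := closedNbhd_subset p' hy
          have hynbA := hp'nbr y hy
          rcases hmemcases' y hyS3 with h | h | h
          · exact absurd h hynbA.2
          · rw [h]
            exact hb'N3wp
          · rw [hCeq] at h
            simp only [Set.mem_insert_iff, Set.mem_singleton_iff] at h
            rcases h with rfl | rfl | rfl | rfl | rfl
            · exact absurd hqA' hynbA.1
            · exact hp'N3wp
            · exact absurd hrA hynbA.1
            · exact self_mem_closedNbhd hwp3
            · exact absurd hxA hynbA.1
        have hrnotp' : r ∉ closedNbhd G (stage G 3) p' := fun h => (hp'nbr r h).1 hrA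
        have hssp : closedNbhd G (stage G 3) p' ⊂ closedNbhd G (stage G 3) wp' := by
          rw [ssubset_iff_subset_not_subset]
          exact ⟨hsubp, fun hrev => hrnotp' (hrev hrN3wp)⟩
        obtain ⟨z, hzX, hzadjp', hznadjwp, -⟩ := hbreak p' hp3 wp' hwp3 hssp
        rw [hX2eq] at hzX
        simp only [Set.mem_insert_iff, Set.mem_singleton_iff] at hzX
        rcases hzX with rfl | rfl
        · exact hnB z hzqX hzqq hzadjp'
        · exact hznadjwp hzpadjwp
  -- case analysis on adjacency of r
  by_cases hrq : G.Adj r q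
  · exact killSide a b q p zq zp wq wp hstage4 hqS3 hpS3 hqA hpB hqnb hpna hmax hnoBoth
      hzqX2 hzqadjq hzqnadja hzpX2 hzpadjp hzpnadjb hwqS3 hwqss hwpS3 hwpss hrq
  by_cases hrp : G.Adj r p
  · refine killSide b a p q zp zq wp wq (by rw [hstage4]; exact Set.pair_comm a b)
      hpS3 hqS3 hpB hqA hpna hqnb (fun x hx => (hmax x hx).symm)
      (fun z hz h1 h2 => hnoBoth z hz h2 h1)
      hzpX2 hzpadjp hzpnadjb hzqX2 hzqadjq hzqnadja hwpS3 hwpss hwqS3 hwqss hrp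
  -- the "neither" case : r is adjacent to neither q nor p
  have hrneq : r ≠ q := by
    rintro rfl
    exact hnoBoth zp hzpX2 (hradj zp hzpX2) hzpadjp
  have hrnep : r ≠ p := by
    rintro rfl
    exact hnoBoth zq hzqX2 hzqadjq (hradj zq hzqX2)
  have hrnea : r ≠ a := fun h => hzqnadja (by rw [← h]; exact hradj zq hzqX2)
  have hrneb : r ≠ b := fun h => hzpnadjb (by rw [← h]; exact hradj zp hzpX2)
  have hrC : r ∈ C := by
    rcases hmemcases r hrS3 with h | h | h
    · exact absurd h hrnea
    · exact absurd h hrneb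
    · exact h
  -- facts about wq (the q-side cone head)
  have hqN2zq : q ∈ closedNbhd G (stage G 2) zq := ⟨hS2mem hqS3, Or.inr hzqadjq.symm⟩
  have hqN3wq : q ∈ closedNbhd G (stage G 3) wq := by
    rw [hN3]
    exact ⟨hwqss.subset hqN2zq, fun h => hX2nS3 h hqS3⟩
  have hwqN3q : wq ∈ closedNbhd G (stage G 3) q := mem_closedNbhd_symm hwqS3 hqN3wq
  have hwqnbB := hqnbr wq hwqN3q
  have hzqadjwq : G.Adj zq wq := by
    have hz := hwqss.subset (self_mem_closedNbhd (hX2S2 hzqX2))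
    rcases hz.2 with h | h
    · exact absurd (h ▸ hwqS3) (hX2nS3 hzqX2)
    · exact h
  have hwqnea : wq ≠ a := fun h => hzqnadja (by rw [← h]; exact hzqadjwq)
  have hwqC : wq ∈ C := by
    rcases hmemcases wq hwqS3 with h | h | h
    · exact absurd h hwqnea
    · exact absurd h hwqnbB.2
    · exact h
  have hwqA : closedNbhd G (stage G 3) wq ⊂ closedNbhd G (stage G 3) a :=
    (hmax wq hwqC).resolve_right hwqnbB.1
  have hrN2zq : r ∈ closedNbhd G (stage G 2) zq :=
    ⟨hS2mem hrS3, Or.inr (hradj zq hzqX2).symm⟩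
  have hrN3wq : r ∈ closedNbhd G (stage G 3) wq := by
    rw [hN3]
    exact ⟨hwqss.subset hrN2zq, fun h => hX2nS3 h hrS3⟩
  have hradjwq : G.Adj r wq := by
    rcases hrN3wq.2 with h | h
    · exfalso
      rw [← h] at hqN3wq
      rcases hqN3wq.2 with h' | h'
      · exact hrneq h'.symm
      · exact hrq h'.symm
    · exact h
  have hwqneq : wq ≠ q := by
    rintro rfl
    rcases hrN3wq.2 with h' | h'
    · exact hrneq h'
    · exact hrq h'
  -- facts about wp (the p-side cone head)
  have hpN2zp : p ∈ closedNbhd G (stage G 2) zp := ⟨hS2mem hpS3, Or.inr hzpadjp.symm⟩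
  have hpN3wp : p ∈ closedNbhd G (stage G 3) wp := by
    rw [hN3]
    exact ⟨hwpss.subset hpN2zp, fun h => hX2nS3 h hpS3⟩
  have hwpN3p : wp ∈ closedNbhd G (stage G 3) p := mem_closedNbhd_symm hwpS3 hpN3wp
  have hwpnbA := hpnbr wp hwpN3p
  have hzpadjwp : G.Adj zp wp := by
    have hz := hwpss.subset (self_mem_closedNbhd (hX2S2 hzpX2))
    rcases hz.2 with h | h
    · exact absurd (h ▸ hwpS3) (hX2nS3 hzpX2)
    · exact h
  have hwpneb : wp ≠ b := fun h => hzpnadjb (by rw [← h]; exact hzpadjwp)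
  have hwpC : wp ∈ C := by
    rcases hmemcases wp hwpS3 with h | h | h
    · exact absurd h hwpnbA.2
    · exact absurd h hwpneb
    · exact h
  have hwpB : closedNbhd G (stage G 3) wp ⊂ closedNbhd G (stage G 3) b :=
    (hmax wp hwpC).resolve_left hwpnbA.1
  have hrN2zp : r ∈ closedNbhd G (stage G 2) zp :=
    ⟨hS2mem hrS3, Or.inr (hradj zp hzpX2).symm⟩
  have hrN3wp : r ∈ closedNbhd G (stage G 3) wp := by
    rw [hN3]
    exact ⟨hwpss.subset hrN2zp, fun h => hX2nS3 h hrS3⟩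
  have hradjwp : G.Adj r wp := by
    rcases hrN3wp.2 with h | h
    · exfalso
      rw [← h] at hpN3wp
      rcases hpN3wp.2 with h' | h'
      · exact hrnep h'.symm
      · exact hrp h'.symm
    · exact h
  have hwpnep : wp ≠ p := by
    rintro rfl
    rcases hrN3wp.2 with h' | h'
    · exact hrnep h'
    · exact hrp h'
  -- distinctness of the five stage-3 corners
  have hqnep : q ≠ p := by
    rintro rfl
    exact (hqnbr q (self_mem_closedNbhd hqS3)).1 hpB
  have hqnewq : q ≠ wq := hwqneq.symm
  have hqnewp : q ≠ wp := by
    rintro rfl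
    exact (hqnbr q (self_mem_closedNbhd hqS3)).1 hwpB
  have hqner : q ≠ r := hrneq.symm
  have hpnewq : p ≠ wq := fun h => hwqnbB.1 (by rw [← h]; exact hpB)
  have hpnewp : p ≠ wp := hwpnep.symm
  have hpner : p ≠ r := hrnep.symm
  have hwqnewp : wq ≠ wp := fun h => hwqnbB.1 (by rw [h]; exact hwpB)
  have hwqner : wq ≠ r := hradjwq.ne'
  have hwpner : wp ≠ r := hradjwp.ne'
  have h5sub : ({q, p, wq, wp, r} : Set W) ⊆ C := by
    intro t ht
    simp only [Set.mem_insert_iff, Set.mem_singleton_iff] at ht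
    rcases ht with rfl | rfl | rfl | rfl | rfl
    · exact hqC
    · exact hpC
    · exact hwqC
    · exact hwpC
    · exact hrC
  have h5card : ({q, p, wq, wp, r} : Set W).ncard = 5 :=
    ncard_five hqnep hqnewq hqnewp hqner hpnewq hpnewp hpner hwqnewp hwqner hwpner
  rcases hcard45 with h4c | ⟨h5c, hk2⟩
  · have hle := Set.ncard_le_ncard h5sub (Set.toFinite C)
    rw [h5card, h4c] at hle
    omega
  · have hCeq : C = {q, p, wq, wp, r} :=
      (Set.eq_of_subset_of_ncard_le h5sub (by rw [h5c, h5card]) (Set.toFinite C)).symm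
    have hzne : zq ≠ zp := by
      rintro rfl
      exact hnoBoth zq hzqX2 hzqadjq hzpadjp
    have hX2eq : X2 = {zq, zp} := by
      refine (Set.eq_of_subset_of_ncard_le ?_ ?_ (Set.toFinite X2)).symm
      · intro t ht
        simp only [Set.mem_insert_iff, Set.mem_singleton_iff] at ht
        rcases ht with rfl | rfl
        · exact hzqX2
        · exact hzpX2
      · rw [hk2, Set.ncard_pair hzne]
    -- N3 q = N3 wq
    have haN3wq : a ∈ closedNbhd G (stage G 3) wq :=
      mem_closedNbhd_symm ha3 (hwqA.subset (self_mem_closedNbhd hwqS3))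
    have hsubq : closedNbhd G (stage G 3) q ⊆ closedNbhd G (stage G 3) wq := by
      intro y hy
      have hyS3 : y ∈ stage G 3 := closedNbhd_subset q hy
      have hynb := hqnbr y hy
      rcases hmemcases y hyS3 with h | h | h
      · rw [h]; exact haN3wq
      · exact absurd h hynb.2
      · rw [hCeq] at h
        simp only [Set.mem_insert_iff, Set.mem_singleton_iff] at h
        rcases h with rfl | rfl | rfl | rfl | rfl
        · exact hqN3wq
        · exact absurd hpB hynb.1
        · exact self_mem_closedNbhd hwqS3
        · exact absurd hwpB hynb.1
        · exact hrN3wq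
    have heqq : closedNbhd G (stage G 3) q = closedNbhd G (stage G 3) wq := by
      by_contra hne
      have hss : closedNbhd G (stage G 3) q ⊂ closedNbhd G (stage G 3) wq :=
        Set.ssubset_iff_subset_ne.mpr ⟨hsubq, hne⟩
      obtain ⟨z, hzX, hzadjq, hznadjwq, -⟩ := hbreak q hqS3 wq hwqS3 hss
      rw [hX2eq] at hzX
      simp only [Set.mem_insert_iff, Set.mem_singleton_iff] at hzX
      rcases hzX with rfl | rfl
      · exact hznadjwq hzqadjwq
      · exact hnoBoth z hzpX2 hzadjq hzpadjp
    -- N3 p = N3 wp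
    have hbN3wp : b ∈ closedNbhd G (stage G 3) wp :=
      mem_closedNbhd_symm hb3 (hwpB.subset (self_mem_closedNbhd hwpS3))
    have hsubp : closedNbhd G (stage G 3) p ⊆ closedNbhd G (stage G 3) wp := by
      intro y hy
      have hyS3 : y ∈ stage G 3 := closedNbhd_subset p hy
      have hynb := hpnbr y hy
      rcases hmemcases y hyS3 with h | h | h
      · exact absurd h hynb.2
      · rw [h]; exact hbN3wp
      · rw [hCeq] at h
        simp only [Set.mem_insert_iff, Set.mem_singleton_iff] at h
        rcases h with rfl | rfl | rfl | rfl | rfl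
        · exact absurd hqA hynb.1
        · exact hpN3wp
        · exact absurd hwqA hynb.1
        · exact self_mem_closedNbhd hwpS3
        · exact hrN3wp
    have heqp : closedNbhd G (stage G 3) p = closedNbhd G (stage G 3) wp := by
      by_contra hne
      have hss : closedNbhd G (stage G 3) p ⊂ closedNbhd G (stage G 3) wp :=
        Set.ssubset_iff_subset_ne.mpr ⟨hsubp, hne⟩
      obtain ⟨z, hzX, hzadjp, hznadjwp, -⟩ := hbreak p hpS3 wp hwpS3 hss
      rw [hX2eq] at hzX
      simp only [Set.mem_insert_iff, Set.mem_singleton_iff] at hzX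
      rcases hzX with rfl | rfl
      · exact hnoBoth z hzqX2 hzqadjq hzadjp
      · exact hznadjwp hzpadjwp
    -- conclude
    have hbnotq : b ∉ closedNbhd G (stage G 3) q := fun h => (hqnbr b h).2 rfl
    have hanotp : a ∉ closedNbhd G (stage G 3) p := fun h => (hpnbr a h).2 rfl
    have hwpN3r : wp ∈ closedNbhd G (stage G 3) r := ⟨hwpS3, Or.inr hradjwp.symm⟩
    have hwqN3r : wq ∈ closedNbhd G (stage G 3) r := ⟨hwqS3, Or.inr hradjwq.symm⟩
    rcases hmax r hrC with hss | hss
    · have hwpa : wp ∈ closedNbhd G (stage G 3) a := hss.subset hwpN3r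
      have haN3wp : a ∈ closedNbhd G (stage G 3) wp := mem_closedNbhd_symm ha3 hwpa
      rw [← heqp] at haN3wp
      exact hanotp haN3wp
    · have hwqb : wq ∈ closedNbhd G (stage G 3) b := hss.subset hwqN3r
      have hbN3wq : b ∈ closedNbhd G (stage G 3) wq := mem_closedNbhd_symm hb3 hwqb
      rw [← heqq] at hbN3wq
      exact hbnotq hbN3wq

end Aux
end CopsRobbers

/-- for every `k ≥ 1`, the vector `(2, 4, k, 1)` is not 0-realizable,
and the vector `(2, 5, 2, 1)` is not 0-realizable. -/
theorem CopsRobbers.not_zero_realizable_24k1_2521 :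
    (∀ k : ℕ, 1 ≤ k → ¬ CopsRobbers.RRealizable 0 [2, 4, k, 1]) ∧
    ¬ CopsRobbers.RRealizable 0 [2, 5, 2, 1] := by
  constructor
  · rintro k - ⟨W, hF, G, hG⟩
    exact @CopsRobbers.Aux.master W hF G 4 k (Or.inl rfl) hG
  · rintro ⟨W, hF, G, hG⟩
    exact @CopsRobbers.Aux.master W hF G 5 2 (Or.inr ⟨rfl, rfl⟩) hG
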